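/- arXiv:2212.12860 — 2 statements merged into one kernel-verified Lean document; each statement's English description precedes it below -/
import Mathlib

section
/- Let ϑ be a strictly positive finite random time, 𝔾 the progressive enlargement of 𝔽 by ϑ, and G the càdlàg Azéma supermartingale G_t = ℙ(ϑ > t | ℱ_t). Let (τ̂_n)_{n∈ℕ} be a sequence of 𝔾-stopping times with lim_{n→∞} τ̂_n = ∞, and let (τ_n)_{n∈ℕ} be a sequence of 𝔽-stopping times such that τ̂_n ∧ ϑ = τ_n ∧ ϑ for all n. Then τ := lim_{n→∞} τ_n satisfies τ ≥ ν := inf{t ∈ ℝ_+ : G_t = 0} almost surely; in particular, if G is strictly positive then τ = ∞ almost surely. -/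
open MeasureTheory Filter Set Function
open scoped Classical ENNReal NNReal

noncomputable section

variable {Ω : Type*}

/-- A process is a local martingale if it admits a localizing sequence of stopping times. -/
def IsLocalMartingale {m0 : MeasurableSpace Ω} (ℱ : Filtration ℝ m0) (μ : Measure Ω)
    (X : ℝ → Ω → ℝ) : Prop :=
  ∃ τ : ℕ → Ω → ℝ,
    (∀ n, IsStoppingTime ℱ (fun ω => (τ n ω : WithTop ℝ))) ∧ (∀ ω, Tendsto (fun n => τ n ω) atTop atTop) ∧
      ∀ n, Martingale (MeasureTheory.stoppedProcess X (fun ω => (τ n ω : WithTop ℝ))) ℱ μ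

/-- A uniformly integrable martingale. -/
def IsUIMartingale {m0 : MeasurableSpace Ω} (ℱ : Filtration ℝ m0) (μ : Measure Ω)
    (X : ℝ → Ω → ℝ) : Prop :=
  Martingale X ℱ μ ∧ UniformIntegrable X 1 μ

/-- The optional σ-algebra on ℝ × Ω: generated by the stochastic intervals ⟦τ,∞⟦. -/
def optionalSigma {m0 : MeasurableSpace Ω} (ℱ : Filtration ℝ m0) : MeasurableSpace (ℝ × Ω) :=
  MeasurableSpace.generateFrom
    {s | ∃ τ : Ω → ℝ, IsStoppingTime ℱ (fun ω => (τ ω : WithTop ℝ)) ∧ s = {p : ℝ × Ω | τ p.2 ≤ p.1}}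

/-- An `𝔽`-optional process. -/
def IsOptionalProcess {m0 : MeasurableSpace Ω} (ℱ : Filtration ℝ m0) (X : ℝ → Ω → ℝ) : Prop :=
  @Measurable (ℝ × Ω) ℝ (optionalSigma ℱ) _ fun p => X p.1 p.2

/-- The predictable σ-algebra on ℝ × Ω. -/
def predictableSigma {m0 : MeasurableSpace Ω} (ℱ : Filtration ℝ m0) :
    MeasurableSpace (ℝ × Ω) :=
  MeasurableSpace.generateFrom
    ({s | ∃ u v : ℝ, ∃ A : Set Ω, MeasurableSet[ℱ u] A ∧ s = Ioc u v ×ˢ A} ∪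
      {s | ∃ A : Set Ω, MeasurableSet[ℱ 0] A ∧ s = Iic 0 ×ˢ A})

/-- An `𝔽`-predictable process. -/
def IsPredictableProcess {m0 : MeasurableSpace Ω} (ℱ : Filtration ℝ m0) (X : ℝ → Ω → ℝ) :
    Prop :=
  @Measurable (ℝ × Ω) ℝ (predictableSigma ℱ) _ fun p => X p.1 p.2

/-- The Lebesgue–Stieltjes measure attached to the path `t ↦ B t ω` (zero junk value if the
path is not a nondecreasing right-continuous function). -/
def pathMeasure (B : ℝ → Ω → ℝ) (ω : Ω) : Measure ℝ :=
  if h : Monotone (fun t => B t ω) ∧ ∀ x, ContinuousWithinAt (fun t => B t ω) (Ici x) x then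
    StieltjesFunction.measure ⟨fun t => B t ω, h.1, h.2⟩
  else 0

/-- The jump `ΔX_t = X_t − X_{t−}` of a process at time `t`. -/
def jumpAt (X : ℝ → Ω → ℝ) (t : ℝ) (ω : Ω) : ℝ :=
  X t ω - leftLim (fun s => X s ω) t

/-- The right jump `Δ⁺X_t = X_{t+} − X_t` of a process at time `t`. -/
def jumpPlusAt (X : ℝ → Ω → ℝ) (t : ℝ) (ω : Ω) : ℝ :=
  rightLim (fun s => X s ω) t - X t ω

/-- The process `X` pre-stopped strictly before the random time `ϑ`,
`X^{ϑ−} = X 1_{[0,ϑ)} + X_{ϑ−} 1_{[ϑ,∞)}`. -/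
def preStopped (X : ℝ → Ω → ℝ) (ϑ : Ω → ℝ) : ℝ → Ω → ℝ := fun t ω =>
  if t < ϑ ω then X t ω else leftLim (fun s => X s ω) (ϑ ω)

/-- `𝒢` is the progressive enlargement of `𝔽` by observations of the random time `ϑ`:
`𝒢_t = ⋂_{u>t} (ℱ_u ⊔ σ(ϑ ∧ u))`. -/
def IsProgressiveEnlargement {m0 : MeasurableSpace Ω} (ℱ 𝒢 : Filtration ℝ m0) (ϑ : Ω → ℝ) :
    Prop :=
  ∀ t : ℝ, (𝒢 t : MeasurableSpace Ω) =
    ⨅ u ∈ Ioi t, ((ℱ u : MeasurableSpace Ω) ⊔ MeasurableSpace.comap (fun ω => min (ϑ ω) u) (borel ℝ))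

/-- `G` is (a version of) the Azéma supermartingale of `ϑ`: `G_t = μ(ϑ > t | ℱ_t)`. -/
def IsAzemaSupermartingale {m0 : MeasurableSpace Ω} (ℱ : Filtration ℝ m0) (μ : Measure Ω)
    (ϑ : Ω → ℝ) (G : ℝ → Ω → ℝ) : Prop :=
  ∀ t : ℝ, G t =ᵐ[μ] μ[Set.indicator {ω | t < ϑ ω} (fun _ => (1 : ℝ)) | ℱ t]

/-- `G̃` is (a version of) the optional Azéma supermartingale of `ϑ`: `G̃_t = μ(ϑ ≥ t | ℱ_t)`. -/
def IsOptionalAzemaSupermartingale {m0 : MeasurableSpace Ω} (ℱ : Filtration ℝ m0)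
    (μ : Measure Ω) (ϑ : Ω → ℝ) (Gt : ℝ → Ω → ℝ) : Prop :=
  ∀ t : ℝ, Gt t =ᵐ[μ] μ[Set.indicator {ω | t ≤ ϑ ω} (fun _ => (1 : ℝ)) | ℱ t]

/-- `Ao` is the dual `𝔽`-optional projection (under `μ`) of the indicator process
`A = 1_{[ϑ,∞)}` of the random time `ϑ`. -/
def IsDualOptionalProjection {m0 : MeasurableSpace Ω} (ℱ : Filtration ℝ m0) (μ : Measure Ω)
    (ϑ : Ω → ℝ) (Ao : ℝ → Ω → ℝ) : Prop :=
  Adapted ℱ Ao ∧ (∀ ω, Monotone fun t => Ao t ω) ∧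
    (∀ ω x, ContinuousWithinAt (fun t => Ao t ω) (Ici x) x) ∧
    (∀ t : ℝ, ∀ ω, t < 0 → Ao t ω = 0) ∧
    ∀ H : ℝ → Ω → ℝ, IsOptionalProcess ℱ H → (∃ C, ∀ t ω, |H t ω| ≤ C) →
      ∫ ω, H (ϑ ω) ω ∂μ = ∫ ω, (∫ s, H s ω ∂(pathMeasure Ao ω)) ∂μ

/-- `Ap` is the dual `𝔽`-predictable projection (under `μ`) of the indicator process
`A = 1_{[ϑ,∞)}` of the random time `ϑ`. -/
def IsDualPredictableProjection {m0 : MeasurableSpace Ω} (ℱ : Filtration ℝ m0) (μ : Measure Ω)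
    (ϑ : Ω → ℝ) (Ap : ℝ → Ω → ℝ) : Prop :=
  IsPredictableProcess ℱ Ap ∧ (∀ ω, Monotone fun t => Ap t ω) ∧
    (∀ ω x, ContinuousWithinAt (fun t => Ap t ω) (Ici x) x) ∧
    (∀ t : ℝ, ∀ ω, t < 0 → Ap t ω = 0) ∧
    ∀ H : ℝ → Ω → ℝ, IsPredictableProcess ℱ H → (∃ C, ∀ t ω, |H t ω| ≤ C) →
      ∫ ω, H (ϑ ω) ω ∂μ = ∫ ω, (∫ s, H s ω ∂(pathMeasure Ap ω)) ∂μ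

/-- `C` is (a version of) the quadratic covariation `[M,N]`: it starts from `0`, has paths of
finite variation, jumps `ΔC = ΔM ΔN`, and `MN − C` is a local martingale. -/
def IsQuadraticCovariation {m0 : MeasurableSpace Ω} (ℱ : Filtration ℝ m0) (μ : Measure Ω)
    (M N C : ℝ → Ω → ℝ) : Prop :=
  (∀ ω, C 0 ω = 0) ∧
    (∀ ω, ∃ f g : ℝ → ℝ, Monotone f ∧ Monotone g ∧ ∀ t, C t ω = f t - g t) ∧
    (∀ t ω, jumpAt C t ω = jumpAt M t ω * jumpAt N t ω) ∧
    IsLocalMartingale ℱ μ fun t ω => M t ω * N t ω - C t ω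

/-- `oX` is (a version of) the `𝔽`-optional projection of `X` under `μ`:
`oX_τ = E[X_τ | ℱ_τ]` a.s. for every finite stopping time `τ`. -/
def IsOptionalProjection {m0 : MeasurableSpace Ω} (ℱ : Filtration ℝ m0) (μ : Measure Ω)
    (X oX : ℝ → Ω → ℝ) : Prop :=
  IsOptionalProcess ℱ oX ∧
    ∀ (τ : Ω → ℝ) (hτ : IsStoppingTime ℱ (fun ω => (τ ω : WithTop ℝ))),
      (fun ω => oX (τ ω) ω) =ᵐ[μ] μ[fun ω => X (τ ω) ω | hτ.measurableSpace]

/-- An abstract stochastic-integration context: a stochastic-integral operation `H ⋅ X` and a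
Doléans (stochastic) exponential `ℰ(X)`, with the requirement that the integral of a process
against a finite-variation integrator is the pathwise Lebesgue–Stieltjes integral and that
`ℰ(X)` solves `Z_t = 1 + (Z_{−} ⋅ X)_t`. -/
structure StochasticCalculus (Ω : Type*) where
  integral : (ℝ → Ω → ℝ) → (ℝ → Ω → ℝ) → ℝ → Ω → ℝ
  dol : (ℝ → Ω → ℝ) → ℝ → Ω → ℝ
  integral_fv :
    ∀ H X hp hm : ℝ → Ω → ℝ,
      (∀ ω, Monotone fun t => hp t ω) → (∀ ω, Monotone fun t => hm t ω) →
        (∀ ω x, ContinuousWithinAt (fun t => hp t ω) (Ici x) x) →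
          (∀ ω x, ContinuousWithinAt (fun t => hm t ω) (Ici x) x) →
            (∀ t ω, X t ω = hp t ω - hm t ω) →
              ∀ t ω, integral H X t ω =
                (∫ s in Ioc 0 t, H s ω ∂(pathMeasure hp ω)) -
                  ∫ s in Ioc 0 t, H s ω ∂(pathMeasure hm ω)
  dol_spec : ∀ X : ℝ → Ω → ℝ, ∀ t ω,
    dol X t ω = 1 + integral (fun s ω' => leftLim (fun u => dol X u ω') s) X t ω

/-- The (multi-dimensional) local martingale `M` has the predictable representation property
for the filtration `𝔽` under `μ`. -/
def HasPRP {m0 : MeasurableSpace Ω} (SC : StochasticCalculus Ω) (ℱ : Filtration ℝ m0)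
    (μ : Measure Ω) {d : ℕ} (M : Fin d → ℝ → Ω → ℝ) : Prop :=
  ∀ N : ℝ → Ω → ℝ, IsLocalMartingale ℱ μ N →
    ∃ ξ : Fin d → ℝ → Ω → ℝ, (∀ i, IsPredictableProcess ℱ (ξ i)) ∧
      ∀ t ω, N t ω = N 0 ω + ∑ i, SC.integral (ξ i) (M i) t ω

/-- `Z` is a martingale density for the market `(S,𝔽,μ)`. -/
def IsMartingaleDensity {m0 : MeasurableSpace Ω} (SC : StochasticCalculus Ω)
    (ℱ : Filtration ℝ m0) (μ : Measure Ω) {k : ℕ} (S : Fin k → ℝ → Ω → ℝ)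
    (Z : ℝ → Ω → ℝ) : Prop :=
  (∀ ω, Z 0 ω = 1) ∧ (∀ t ω, 0 < Z t ω) ∧ IsUIMartingale ℱ μ Z ∧
    ∃ φ : ℝ → Ω → ℝ, IsPredictableProcess ℱ φ ∧ (∀ t ω, 0 < φ t ω ∧ φ t ω ≤ 1) ∧
      ∀ i, IsLocalMartingale ℱ μ fun t ω => Z t ω * SC.integral φ (S i) t ω

/-- `Y` is the essential supremum of the family `X` of random variables, under `μ`. -/
def IsEssSupFamily {m0 : MeasurableSpace Ω} {ι : Sort*} (μ : Measure Ω) (X : ι → Ω → ℝ) (Y : Ω → ℝ) : Prop :=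
  (∀ i, X i ≤ᵐ[μ] Y) ∧ ∀ Z : Ω → ℝ, (∀ i, X i ≤ᵐ[μ] Z) → Y ≤ᵐ[μ] Z

/-- `Y` is the essential infimum of the family `X` of random variables, under `μ`. -/
def IsEssInfFamily {m0 : MeasurableSpace Ω} {ι : Sort*} (μ : Measure Ω) (X : ι → Ω → ℝ) (Y : Ω → ℝ) : Prop :=
  (∀ i, Y ≤ᵐ[μ] X i) ∧ ∀ Z : Ω → ℝ, (∀ i, Z ≤ᵐ[μ] X i) → Z ≤ᵐ[μ] Y


/-- A predictable stopping time: a stopping time admitting an announcing sequence. -/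
def IsPredictableStoppingTime {m0 : MeasurableSpace Ω} (ℱ : Filtration ℝ m0) (σ : Ω → ℝ) :
    Prop :=
  IsStoppingTime ℱ (fun ω => (σ ω : WithTop ℝ)) ∧ ∃ σn : ℕ → Ω → ℝ, (∀ n, IsStoppingTime ℱ (fun ω => (σn n ω : WithTop ℝ))) ∧
    (∀ n ω, σn n ω ≤ σn (n + 1) ω) ∧ (∀ ω, Tendsto (fun n => σn n ω) atTop (nhds (σ ω))) ∧
      ∀ n ω, 0 < σ ω → σn n ω < σ ω

/-- Membership in the space `𝒮²`: the second moments of the values of the process at all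
stopping times with values in `[0,T]` are uniformly bounded. -/
def MemS2 {m0 : MeasurableSpace Ω} (ℱ : Filtration ℝ m0) (μ : Measure Ω) (T : ℝ)
    (X : ℝ → Ω → ℝ) : Prop :=
  IsOptionalProcess ℱ X ∧ ∃ b : ℝ≥0∞, b ≠ ⊤ ∧
    ∀ τ : Ω → ℝ, IsStoppingTime ℱ (fun ω => (τ ω : WithTop ℝ)) → (∀ ω, τ ω ∈ Icc 0 T) →
      ∫⁻ ω, ENNReal.ofReal ((X (τ ω) ω) ^ 2) ∂μ ≤ b

/-- Membership in the space `ℋ²(M)`, where `QM` is the quadratic variation `[M]` of the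
driving martingale `M`. -/
def MemH2 {m0 : MeasurableSpace Ω} (ℱ : Filtration ℝ m0) (μ : Measure Ω) (T : ℝ)
    (QM : ℝ → Ω → ℝ) (Z : ℝ → Ω → ℝ) : Prop :=
  IsPredictableProcess ℱ Z ∧
    ∫⁻ ω, (∫⁻ s in Ioc 0 T, ENNReal.ofReal ((Z s ω) ^ 2) ∂(pathMeasure QM ω)) ∂μ < ⊤

/-- `(Y, Zp, K = Kc + Kd + Kg)` solves, on `[0,T]`, the reflected generalized BSDE with
terminal condition `P_T`, generator `gen` integrated against `dΓ`, extra finite-variation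
driver `extra`, martingale part driven by `MQ`, lower obstacle `P` and the Skorokhod
minimality conditions for the three parts of `K`. -/
def SolvesReflectedGBSDE {m0 : MeasurableSpace Ω} (ℱ : Filtration ℝ m0) (μ : Measure Ω)
    (SC : StochasticCalculus Ω) {d : ℕ} (MQ : Fin d → ℝ → Ω → ℝ) (Γ : ℝ → Ω → ℝ)
    (P : ℝ → Ω → ℝ) (T : ℝ) (gen : ℝ → Ω → ℝ → ℝ) (extra : ℝ → Ω → ℝ)
    (Y : ℝ → Ω → ℝ) (Zp : Fin d → ℝ → Ω → ℝ) (K Kc Kd Kg : ℝ → Ω → ℝ) : Prop :=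
  (∀ i, IsPredictableProcess ℱ (Zp i)) ∧
    IsPredictableProcess ℱ K ∧ (∀ ω, K 0 ω = 0) ∧ (∀ ω, Monotone fun t => K t ω) ∧
    (∀ t ω, K t ω = Kc t ω + Kd t ω + Kg t ω) ∧
    (∀ ω, Continuous fun t => Kc t ω) ∧ (∀ ω, Monotone fun t => Kc t ω) ∧
    (∀ ω, Monotone fun t => Kd t ω) ∧
    (∀ ω x, ContinuousWithinAt (fun t => Kd t ω) (Ici x) x) ∧
    IsPredictableProcess ℱ Kd ∧
    (∀ t ω, Kd t ω = ∑' s : (Iic t : Set ℝ), jumpAt Kd (s : ℝ) ω) ∧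
    (∀ ω, Monotone fun t => Kg t ω) ∧
    (∀ t ω, Kg t ω = ∑' s : (Ico 0 t : Set ℝ), jumpPlusAt Kg (s : ℝ) ω) ∧
    (∀ t : ℝ, t ∈ Icc 0 T → ∀ᵐ ω ∂μ,
      Y t ω = P T ω + (∫ s in Ioc t T, gen s ω (Y s ω) ∂(pathMeasure Γ ω)) +
        (extra T ω - extra t ω) -
          (∑ i, (SC.integral (Zp i) (MQ i) T ω - SC.integral (Zp i) (MQ i) t ω)) +
            (K T ω - K t ω)) ∧
    (∀ τ : Ω → ℝ, IsStoppingTime ℱ (fun ω => (τ ω : WithTop ℝ)) → (∀ ω, τ ω ∈ Icc 0 T) →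
      ∀ᵐ ω ∂μ, P (τ ω) ω ≤ Y (τ ω) ω) ∧
    (∀ᵐ ω ∂μ, ∫ s in Ioc 0 T,
        (if limsup (fun u => P u ω) (nhdsWithin s (Iio s)) < leftLim (fun u => Y u ω) s
          then (1 : ℝ) else 0) ∂(pathMeasure Kc ω) = 0) ∧
    (∀ σ : Ω → ℝ, IsPredictableStoppingTime ℱ σ → (∀ ω, σ ω ∈ Icc 0 T) →
      ∀ᵐ ω ∂μ, (leftLim (fun u => Y u ω) (σ ω) -
        limsup (fun u => P u ω) (nhdsWithin (σ ω) (Iio (σ ω)))) * jumpAt Kd (σ ω) ω = 0) ∧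
    ∀ σ : Ω → ℝ, IsStoppingTime ℱ (fun ω => (σ ω : WithTop ℝ)) → (∀ ω, σ ω ∈ Icc 0 T) →
      ∀ᵐ ω ∂μ, (Y (σ ω) ω - P (σ ω) ω) * jumpPlusAt Kg (σ ω) ω = 0

/-- The right support of a nondecreasing function. -/
def rightSupport (B : ℝ → ℝ) : Set ℝ :=
  {t : ℝ | ∀ ε > 0, 0 < B (t + ε) - B t}

/-- Auxiliary: for each fixed time `q`, almost surely `τlim < q` implies `G q = 0`. -/
lemma aux_claimA {Ω : Type*} {m0 : MeasurableSpace Ω} (μ : Measure Ω) [IsProbabilityMeasure μ]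
    (ℱ : Filtration ℝ m0) (ϑ : Ω → ℝ) (hϑmeas : Measurable ϑ)
    (G : ℝ → Ω → ℝ) (hG : IsAzemaSupermartingale ℱ μ ϑ G)
    (τhat : ℕ → Ω → ℝ) (hτhatmeas : ∀ n, Measurable (τhat n))
    (hτhatlim : ∀ ω, Tendsto (fun n => τhat n ω) atTop atTop)
    (τ : ℕ → Ω → ℝ) (hτ : ∀ n, IsStoppingTime ℱ (fun ω => (τ n ω : WithTop ℝ)))
    (hagree : ∀ n ω, min (τhat n ω) (ϑ ω) = min (τ n ω) (ϑ ω))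
    (τlim : Ω → EReal)
    (hτlim : ∀ ω, Tendsto (fun n => (τ n ω : EReal)) atTop (nhds (τlim ω)))
    (q : ℝ) :
    ∀ᵐ ω ∂μ, τlim ω < (q : EReal) → G q ω = 0 := by
  classical
  set g : Ω → ℝ := Set.indicator {ω | q < ϑ ω} (fun _ => (1 : ℝ)) with hgdef
  have hSmeas : MeasurableSet {ω | q < ϑ ω} := measurableSet_lt measurable_const hϑmeas
  have hgint : Integrable g μ := (integrable_const (1 : ℝ)).indicator hSmeas
  set h : Ω → ℝ := μ[g | ℱ q] with hhdef
  have hhnn : 0 ≤ᵐ[μ] h :=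
    condExp_nonneg (Filter.Eventually.of_forall fun ω => Set.indicator_nonneg (by simp) ω)
  have hhmeas : Measurable h := (stronglyMeasurable_condExp.mono (ℱ.le q)).measurable
  have hhint : Integrable h μ := integrable_condExp
  set f : Ω → ℝ≥0∞ := fun ω => ENNReal.ofReal (h ω) with hfdef
  have hfmeas : Measurable f := ENNReal.measurable_ofReal.comp hhmeas
  set A : ℕ → Set Ω := fun n => {ω | τ n ω < q} with hAdef
  have hAq : ∀ n, MeasurableSet[ℱ q] (A n) := fun n => by
    have h := (hτ n).measurableSet_lt q; simp only [WithTop.coe_lt_coe] at h; exact h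
  have hA0 : ∀ n, MeasurableSet (A n) := fun n => ℱ.le q _ (hAq n)
  set B : ℕ → Set Ω := fun n => {ω | τhat n ω < ϑ ω} with hBdef
  have hBmeas : ∀ n, MeasurableSet (B n) := fun n => measurableSet_lt (hτhatmeas n) hϑmeas
  -- the key bound
  have hkey : ∀ n, ∫⁻ ω in A n, f ω ∂μ ≤ μ (B n) := by
    intro n
    have h1 : ∫⁻ ω in A n, f ω ∂μ = ENNReal.ofReal (∫ ω in A n, h ω ∂μ) :=
      (ofReal_integral_eq_lintegral_ofReal (hhint.restrict) (ae_restrict_of_ae hhnn)).symm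
    have h2 : ∫ ω in A n, h ω ∂μ = ∫ ω in A n, g ω ∂μ :=
      setIntegral_condExp (ℱ.le q) hgint (hAq n)
    have h3 : ∫ ω in A n, g ω ∂μ = (μ (A n ∩ {ω | q < ϑ ω})).toReal := by
      rw [hgdef, setIntegral_indicator hSmeas]
      simp [measureReal_def]
    have hsub : A n ∩ {ω | q < ϑ ω} ⊆ B n := by
      intro ω hω
      have hτlt : τ n ω < ϑ ω := lt_trans hω.1 hω.2
      have hmin : min (τhat n ω) (ϑ ω) < ϑ ω := by
        rw [hagree n ω, min_eq_left hτlt.le]; exact hτlt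
      rcases min_lt_iff.mp hmin with h' | h'
      · exact h'
      · exact absurd h' (lt_irrefl _)
    calc ∫⁻ ω in A n, f ω ∂μ = ENNReal.ofReal ((μ (A n ∩ {ω | q < ϑ ω})).toReal) := by
          rw [h1, h2, h3]
      _ = μ (A n ∩ {ω | q < ϑ ω}) := ENNReal.ofReal_toReal (measure_ne_top μ _)
      _ ≤ μ (B n) := measure_mono hsub
  -- μ (B n) → 0
  have hμB : Tendsto (fun n => μ (B n)) atTop (nhds 0) := by
    have hdom : Tendsto (fun n => ∫⁻ ω, (B n).indicator (fun _ => (1 : ℝ≥0∞)) ω ∂μ) atTop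
        (nhds (∫⁻ _, 0 ∂μ)) := by
      refine tendsto_lintegral_of_dominated_convergence (fun _ => (1 : ℝ≥0∞))
        (fun n => measurable_const.indicator (hBmeas n)) ?_ ?_ ?_
      · intro n
        exact Filter.Eventually.of_forall fun ω => Set.indicator_le_self' (by simp) ω
      · simp
      · refine Filter.Eventually.of_forall fun ω => ?_
        have hev : ∀ᶠ n in atTop, ϑ ω ≤ τhat n ω := (hτhatlim ω).eventually_ge_atTop (ϑ ω)
        refine Tendsto.congr' ?_ (tendsto_const_nhds (x := (0 : ℝ≥0∞)))
        filter_upwards [hev] with n hn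
        exact (Set.indicator_of_notMem (by simpa [hBdef, not_lt] using hn) _).symm
    have heq : ∀ n, ∫⁻ ω, (B n).indicator (fun _ => (1 : ℝ≥0∞)) ω ∂μ = μ (B n) := fun n => by
      rw [lintegral_indicator (hBmeas n) _, setLIntegral_one]
    simpa only [heq, lintegral_zero] using hdom
  -- Fatou
  set F : ℕ → Ω → ℝ≥0∞ := fun n => (A n).indicator f with hFdef
  have hFmeas : ∀ n, Measurable (F n) := fun n => hfmeas.indicator (hA0 n)
  have hliminf_zero : ∫⁻ ω, liminf (fun n => F n ω) atTop ∂μ = 0 := by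
    refine le_antisymm ?_ zero_le
    calc ∫⁻ ω, liminf (fun n => F n ω) atTop ∂μ ≤ liminf (fun n => ∫⁻ ω, F n ω ∂μ) atTop :=
          lintegral_liminf_le hFmeas
      _ ≤ liminf (fun n => μ (B n)) atTop := by
          refine Filter.liminf_le_liminf (Filter.Eventually.of_forall fun n => ?_)
          rw [hFdef]
          calc ∫⁻ ω, (A n).indicator f ω ∂μ = ∫⁻ ω in A n, f ω ∂μ :=
                lintegral_indicator (hA0 n) f
            _ ≤ μ (B n) := hkey n
      _ = 0 := hμB.liminf_eq
  have hae : ∀ᵐ ω ∂μ, liminf (fun n => F n ω) atTop = 0 :=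
    (lintegral_eq_zero_iff (Measurable.liminf hFmeas)).mp hliminf_zero
  filter_upwards [hae, hhnn, hG q] with ω hω hnn hGq
  intro hlt
  have hev : ∀ᶠ n in atTop, ω ∈ A n := by
    have := (hτlim ω).eventually_lt_const hlt
    filter_upwards [this] with n hn
    exact EReal.coe_lt_coe_iff.mp hn
  have hlim_eq : liminf (fun n => F n ω) atTop = f ω := by
    have : (fun n => F n ω) =ᶠ[atTop] fun _ => f ω := by
      filter_upwards [hev] with n hn
      exact Set.indicator_of_mem hn f
    rw [Filter.liminf_congr this, Filter.liminf_const]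
  have hfω : f ω = 0 := by rw [← hlim_eq]; exact hω
  have hhω : h ω = 0 := le_antisymm (by simpa [hfdef, ENNReal.ofReal_eq_zero] using hfω) hnn
  rw [hGq]
  exact hhω

/-- Lemma 2.4. If `(τ̂_n)` is a sequence of `𝔾`-stopping times tending to `∞`
and `(τ_n)` are `𝔽`-stopping times with `τ̂_n ∧ ϑ = τ_n ∧ ϑ`, then the limit `τ` of `(τ_n)`
satisfies `τ ≥ ν := inf{t ≥ 0 : G_t = 0}` a.s.; in particular `τ = ∞` a.s. if `G > 0`. -/
theorem reduction_limit_dominates_zero_time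
    {Ω : Type*} {m0 : MeasurableSpace Ω} (μ : Measure Ω) [IsProbabilityMeasure μ]
    (ℱ 𝒢 : Filtration ℝ m0) (ϑ : Ω → ℝ) (hϑmeas : Measurable ϑ) (hϑpos : ∀ ω, 0 < ϑ ω)
    (hprog : IsProgressiveEnlargement ℱ 𝒢 ϑ)
    (G : ℝ → Ω → ℝ) (hG : IsAzemaSupermartingale ℱ μ ϑ G)
    (hGrc : ∀ ω x, ContinuousWithinAt (fun t => G t ω) (Ici x) x)
    (τhat : ℕ → Ω → ℝ) (hτhat : ∀ n, IsStoppingTime 𝒢 (fun ω => (τhat n ω : WithTop ℝ)))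
    (hτhatlim : ∀ ω, Tendsto (fun n => τhat n ω) atTop atTop)
    (τ : ℕ → Ω → ℝ) (hτ : ∀ n, IsStoppingTime ℱ (fun ω => (τ n ω : WithTop ℝ)))
    (hagree : ∀ n ω, min (τhat n ω) (ϑ ω) = min (τ n ω) (ϑ ω))
    (τlim : Ω → EReal)
    (hτlim : ∀ ω, Tendsto (fun n => (τ n ω : EReal)) atTop (nhds (τlim ω))) :
    (∀ᵐ ω ∂μ,
        sInf {t : EReal | ∃ r : ℝ, t = (r : EReal) ∧ 0 ≤ r ∧ G r ω = 0} ≤ τlim ω) ∧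
      ((∀ t : ℝ, ∀ ω, 0 < G t ω) → ∀ᵐ ω ∂μ, τlim ω = ⊤) := by
  have hτhatmeas : ∀ n, Measurable (τhat n) := fun n =>
    measurable_of_Iic fun t => 𝒢.le t _ (by
      have h := (hτhat n).measurableSet_le t; simp only [WithTop.coe_le_coe] at h; exact h)
  -- pointwise: ϑ ≤ τlim
  have hstep1 : ∀ ω, ((ϑ ω : ℝ) : EReal) ≤ τlim ω := by
    intro ω
    refine ge_of_tendsto (hτlim ω) ?_
    filter_upwards [(hτhatlim ω).eventually_ge_atTop (ϑ ω)] with n hn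
    have hmin : min (τ n ω) (ϑ ω) = ϑ ω := by rw [← hagree n ω]; exact min_eq_right hn
    exact EReal.coe_le_coe_iff.mpr (min_eq_right_iff.mp hmin)
  have hA : ∀ᵐ ω ∂μ, ∀ p : ℚ, τlim ω < ((p : ℝ) : EReal) → G (p : ℝ) ω = 0 := by
    rw [ae_all_iff]
    intro p
    exact aux_claimA μ ℱ ϑ hϑmeas G hG τhat hτhatmeas hτhatlim τ hτ hagree τlim hτlim (p : ℝ)
  constructor
  · filter_upwards [hA] with ω hω
    by_contra hcon
    push_neg at hcon
    obtain ⟨p, hp1, hp2⟩ := EReal.exists_rat_btwn_of_lt hcon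
    have hGp : G (p : ℝ) ω = 0 := hω p hp1
    have hp0 : (0 : ℝ) ≤ (p : ℝ) := by
      have h1 : ((0 : ℝ) : EReal) < ((p : ℝ) : EReal) :=
        lt_of_lt_of_le (lt_of_lt_of_le (EReal.coe_lt_coe_iff.mpr (hϑpos ω)) (hstep1 ω)) hp1.le
      exact (EReal.coe_lt_coe_iff.mp h1).le
    have hmem : (((p : ℝ) : EReal)) ∈
        {t : EReal | ∃ r : ℝ, t = (r : EReal) ∧ 0 ≤ r ∧ G r ω = 0} :=
      ⟨(p : ℝ), rfl, hp0, hGp⟩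
    exact absurd (sInf_le hmem) (not_le.mpr hp2)
  · intro hpos
    filter_upwards [hA] with ω hω
    by_contra hne
    obtain ⟨p, hp1, _⟩ := EReal.exists_rat_btwn_of_lt (lt_top_iff_ne_top.mpr hne)
    exact absurd (hω p hp1) (ne_of_gt (hpos (p : ℝ) ω))

end
end

section
/- Let Γ̃ be a continuous bounded nondecreasing 𝔽-adapted process, R a bounded right-continuous process, P_T a bounded terminal variable, and set Γ̃ⁿ = nΓ̃. Then for any 𝔽-stopping time ν with ℙ(ν ∈ S̄ ∩ [0,T]) = 1, where S̄ = S^r(Γ̃) ∪ {T} and S^r(Γ̃) is the right support of Γ̃, one has almost surely lim_{n→∞} [ P_T e^{Γ̃ⁿ_ν − Γ̃ⁿ_T} + ∫_{(ν,T]} R_s e^{Γ̃ⁿ_ν − Γ̃ⁿ_s} dΓ̃ⁿ_s ] = P_ν 1_{ν = T} + R_ν 1_{ν < T}; in particular, on {ν < T} the measures 1_{(ν,T]} e^{Γ̃ⁿ_ν − Γ̃ⁿ_s} dΓ̃ⁿ_s converge to the Dirac measure at ν. -/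
open MeasureTheory Filter Set Function
open scoped Classical ENNReal NNReal

noncomputable section

variable {Ω : Type*}

/-- A right-continuous real function is measurable. -/
lemma measurable_of_rightContinuous {f : ℝ → ℝ}
    (hf : ∀ t, ContinuousWithinAt f (Ici t) t) : Measurable f := by
  have h : ∀ x : ℝ, Tendsto (fun n : ℕ => f ((⌈x * (n + 1 : ℕ)⌉ : ℝ) / (n + 1 : ℕ)))
      atTop (nhds (f x)) := by
    intro x
    have hseq : Tendsto (fun n : ℕ => (⌈x * (n + 1 : ℕ)⌉ : ℝ) / (n + 1 : ℕ)) atTop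
        (nhdsWithin x (Ici x)) := by
      apply tendsto_nhdsWithin_of_tendsto_nhds_of_eventually_within
      · have h1 : ∀ n : ℕ, |(⌈x * (n + 1 : ℕ)⌉ : ℝ) / (n + 1 : ℕ) - x| ≤ 1 / (n + 1 : ℕ) := by
          intro n
          have hpos : (0 : ℝ) < (n + 1 : ℕ) := by positivity
          rw [abs_sub_le_iff]
          constructor
          · rw [div_sub' hpos.ne', div_le_div_iff₀ hpos hpos]
            have := Int.ceil_lt_add_one (x * (n + 1 : ℕ))
            nlinarith
          · rw [sub_div' hpos.ne', div_le_div_iff₀ hpos hpos]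
            have := Int.le_ceil (x * (n + 1 : ℕ))
            nlinarith
        have h2 : Tendsto (fun n : ℕ => 1 / ((n : ℝ) + 1)) atTop (nhds 0) :=
          tendsto_one_div_add_atTop_nhds_zero_nat
        have h3 : Tendsto (fun n : ℕ => (⌈x * (n + 1 : ℕ)⌉ : ℝ) / (n + 1 : ℕ) - x) atTop
            (nhds 0) := by
          refine squeeze_zero_norm (fun n => ?_) h2
          have := h1 n
          rw [Real.norm_eq_abs]
          refine this.trans (le_of_eq ?_)
          push_cast
          ring
        have := h3.add_const x
        simpa using this
      · filter_upwards with n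
        have hpos : (0 : ℝ) < (n + 1 : ℕ) := by positivity
        have := Int.le_ceil (x * (n + 1 : ℕ))
        rw [mem_Ici, le_div_iff₀ hpos]
        exact this
    exact (hf x).tendsto.comp hseq
  refine measurable_of_tendsto_metrizable (fun n : ℕ => ?_) (tendsto_pi_nhds.2 h)
  exact (measurable_from_top (f := fun m : ℤ => f ((m : ℝ) / (n + 1 : ℕ)))).comp
    (Int.measurable_ceil.comp (measurable_id.mul_const _))

/-- Pushforward of the restricted Stieltjes measure of a continuous nondecreasing function. -/
lemma stieltjes_map_restrict (f : StieltjesFunction ℝ) (hf : Continuous f)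
    {a b : ℝ} (hab : a ≤ b) :
    (f.measure.restrict (Ioc a b)).map f = volume.restrict (Ioc (f a) (f b)) := by
  have hfin : IsFiniteMeasure (f.measure.restrict (Ioc a b)) := by
    constructor
    rw [Measure.restrict_apply_univ, f.measure_Ioc]
    exact ENNReal.ofReal_lt_top
  have hmap : IsFiniteMeasure ((f.measure.restrict (Ioc a b)).map f) := by
    constructor
    rw [Measure.map_apply hf.measurable MeasurableSet.univ]
    simpa using hfin.measure_univ_lt_top
  refine Measure.ext_of_Iic _ _ (fun c => ?_)
  rw [Measure.map_apply hf.measurable measurableSet_Iic, Measure.restrict_apply' measurableSet_Ioc,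
    Measure.restrict_apply' measurableSet_Ioc]
  rcases lt_or_ge c (f a) with hc | hc
  · have h1 : f ⁻¹' Iic c ∩ Ioc a b = ∅ := by
      ext s; simp only [mem_inter_iff, mem_preimage, mem_Iic, mem_Ioc, mem_empty_iff_false,
        iff_false, not_and, and_imp]
      intro hfs has hsb
      exact absurd (f.mono has.le) (not_le.2 (lt_of_le_of_lt hfs hc))
    have h2 : Iic c ∩ Ioc (f a) (f b) = ∅ := by
      ext u; simp only [mem_inter_iff, mem_Iic, mem_Ioc, mem_empty_iff_false, iff_false,
        not_and, and_imp]
      intro hu hau _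
      exact absurd hau (not_lt.2 (hu.trans hc.le))
    rw [h1, h2]
    simp
  rcases le_or_gt (f b) c with hc' | hc'
  · have h1 : f ⁻¹' Iic c ∩ Ioc a b = Ioc a b := by
      refine inter_eq_right.2 (fun s hs => ?_)
      exact mem_preimage.2 ((f.mono hs.2).trans hc')
    have h2 : Iic c ∩ Ioc (f a) (f b) = Ioc (f a) (f b) := by
      refine inter_eq_right.2 (fun u hu => hu.2.trans hc')
    rw [h1, h2, f.measure_Ioc, Real.volume_Ioc]
  · -- f a ≤ c < f b
    set S : Set ℝ := {s ∈ Icc a b | f s ≤ c} with hS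
    have hSne : S.Nonempty := ⟨a, ⟨le_refl a, hab⟩, hc⟩
    have hSbdd : BddAbove S := ⟨b, fun s hs => hs.1.2⟩
    have hSclosed : IsClosed S := by
      have : S = Icc a b ∩ f ⁻¹' Iic c := rfl
      rw [this]
      exact isClosed_Icc.inter (isClosed_Iic.preimage hf)
    set q := sSup S with hq
    have hqS : q ∈ S := hSclosed.csSup_mem hSne hSbdd
    have haq : a ≤ q := hqS.1.1
    have hqb : q ≤ b := hqS.1.2
    have hfq : f q = c := by
      refine le_antisymm hqS.2 ?_
      by_contra hlt
      push_neg at hlt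
      have hqb' : q < b := by
        rcases eq_or_lt_of_le hqb with h | h
        · exact absurd (h ▸ hlt) (not_lt.2 hc'.le)
        · exact h
      have hev : ∀ᶠ s in nhdsWithin q (Ioi q), f s < c ∧ s < b := by
        have h1 : ∀ᶠ s in nhds q, f s < c := (hf.tendsto q).eventually (eventually_lt_nhds hlt)
        have h2 : ∀ᶠ s in nhds q, s < b := eventually_lt_nhds hqb'
        exact (nhdsWithin_le_nhds (h1.and h2))
      obtain ⟨s, hs, hs2⟩ := (hev.and self_mem_nhdsWithin).exists
      have : s ∈ S := ⟨⟨haq.trans (le_of_lt hs2), hs.2.le⟩, hs.1.le⟩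
      exact absurd (le_csSup hSbdd this) (not_le.2 hs2)
    have h1 : f ⁻¹' Iic c ∩ Ioc a b = Ioc a q := by
      ext s
      simp only [mem_inter_iff, mem_preimage, mem_Iic, mem_Ioc]
      constructor
      · rintro ⟨hfs, has, hsb⟩
        exact ⟨has, le_csSup hSbdd ⟨⟨has.le, hsb⟩, hfs⟩⟩
      · rintro ⟨has, hsq⟩
        exact ⟨(f.mono hsq).trans hfq.le, has, hsq.trans hqb⟩
    have h2 : Iic c ∩ Ioc (f a) (f b) = Ioc (f a) c := by
      ext u
      simp only [mem_inter_iff, mem_Iic, mem_Ioc]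
      exact ⟨fun h => ⟨h.2.1, h.1⟩, fun h => ⟨h.2, h.1, h.2.trans hc'.le⟩⟩
    rw [h1, h2, f.measure_Ioc, Real.volume_Ioc, hfq]

/-- Key exponential identity for Stieltjes integrals of continuous nondecreasing functions. -/
lemma stieltjes_exp_integral (f : StieltjesFunction ℝ) (hf : Continuous f)
    {a b : ℝ} (hab : a ≤ b) {n : ℝ} (hn : 0 < n) :
    n * ∫ s in Ioc a b, Real.exp (-(n * f s)) ∂f.measure =
      Real.exp (-(n * f a)) - Real.exp (-(n * f b)) := by
  have hg : Continuous fun u : ℝ => Real.exp (-(n * u)) := by continuity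
  have h1 : ∫ s in Ioc a b, Real.exp (-(n * f s)) ∂f.measure =
      ∫ u in Ioc (f a) (f b), Real.exp (-(n * u)) := by
    rw [← stieltjes_map_restrict f hf hab,
      integral_map hf.measurable.aemeasurable hg.aestronglyMeasurable]
  rw [h1]
  have hfab : f a ≤ f b := f.mono hab
  have h2 : ∫ u in Ioc (f a) (f b), Real.exp (-(n * u)) =
      ∫ u in (f a)..(f b), Real.exp (-(n * u)) := (intervalIntegral.integral_of_le hfab).symm
  rw [h2]
  have h3 : ∀ u : ℝ, HasDerivAt (fun v => -Real.exp (-(n * v)) / n) (Real.exp (-(n * u))) u := by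
    intro u
    have : HasDerivAt (fun v : ℝ => -(n * v)) (-n) u := by
      simpa using ((hasDerivAt_id u).const_mul n).fun_neg
    have := (this.exp).fun_neg.div_const n
    rw [mul_neg, neg_neg, mul_div_assoc, div_self hn.ne', mul_one] at this
    exact this
  rw [intervalIntegral.integral_eq_sub_of_hasDerivAt (fun u _ => h3 u)
    (hg.intervalIntegrable _ _)]
  field_simp
  ring

/-- Lemma 3.4x. Convergence of the penalized exponential weights to the
payoff evaluated at a stopping time with values in the right support of `Γ̃`. -/
theorem penalized_exponential_dirac_limit
    {Ω : Type*} {m0 : MeasurableSpace Ω} (μ : Measure Ω) [IsProbabilityMeasure μ]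
    (ℱ : Filtration ℝ m0) (T : ℝ) (hT : 0 < T)
    (Γ : ℝ → Ω → ℝ) (hΓadapted : Adapted ℱ Γ) (hΓmono : ∀ ω, Monotone fun t => Γ t ω)
    (hΓcont : ∀ ω, Continuous fun t => Γ t ω) (hΓbdd : ∃ C, ∀ t ω, |Γ t ω| ≤ C)
    (hΓ0 : ∀ ω, Γ 0 ω = 0)
    (R : ℝ → Ω → ℝ) (hRbdd : ∃ C, ∀ t ω, |R t ω| ≤ C)
    (hRrc : ∀ ω t, ContinuousWithinAt (fun s => R s ω) (Ici t) t)
    (PT : Ω → ℝ) (hPTbdd : ∃ C, ∀ ω, |PT ω| ≤ C)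
    (ν : Ω → ℝ) (hν : IsStoppingTime ℱ (fun ω => (ν ω : WithTop ℝ)))
    (hνsupp : ∀ᵐ ω ∂μ,
      ν ω ∈ Icc 0 T ∧ (ν ω = T ∨ ν ω ∈ rightSupport fun s => Γ s ω)) :
    ∀ᵐ ω ∂μ, Tendsto
      (fun n : ℕ =>
        PT ω * Real.exp ((n : ℝ) * Γ (ν ω) ω - (n : ℝ) * Γ T ω) +
          (n : ℝ) * ∫ s in Ioc (ν ω) T,
            R s ω * Real.exp ((n : ℝ) * Γ (ν ω) ω - (n : ℝ) * Γ s ω) ∂(pathMeasure Γ ω))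
      atTop (nhds (if ν ω < T then R (ν ω) ω else PT ω)) := by
  obtain ⟨CΓ, hCΓ⟩ := hΓbdd
  obtain ⟨CR, hCR⟩ := hRbdd
  obtain ⟨CP, hCP⟩ := hPTbdd
  filter_upwards [hνsupp] with ω hω
  obtain ⟨⟨hν0, hνT⟩, hcase⟩ := hω
  have hCR0 : 0 ≤ CR := (abs_nonneg _).trans (hCR 0 ω)
  have hCP0 : 0 ≤ CP := (abs_nonneg _).trans (hCP ω)
  by_cases hlt : ν ω < T
  · -- main case
    have hrs : ν ω ∈ rightSupport fun s => Γ s ω := by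
      rcases hcase with h | h
      · exact absurd h (ne_of_lt hlt)
      · exact h
    rw [if_pos hlt]
    have hcond : Monotone (fun t => Γ t ω) ∧
        ∀ x, ContinuousWithinAt (fun t => Γ t ω) (Ici x) x :=
      ⟨hΓmono ω, fun x => (hΓcont ω).continuousWithinAt⟩
    set F : StieltjesFunction ℝ := ⟨fun t => Γ t ω, hcond.1, hcond.2⟩ with hF
    have hpm : pathMeasure Γ ω = F.measure := by
      rw [pathMeasure, dif_pos hcond]
    have hFcont : Continuous F := hΓcont ω
    simp only [hpm]
    rw [Metric.tendsto_atTop]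
    intro ε hε
    set Rν := R (ν ω) ω with hRν
    -- right-continuity of R at ν ω
    obtain ⟨δ0, hδ0pos, hδ0⟩ := Metric.continuousWithinAt_iff.mp (hRrc ω (ν ω)) (ε/4)
      (by positivity)
    set δ : ℝ := min (δ0/2) (T - ν ω) with hδ
    have hδpos : 0 < δ := lt_min (by positivity) (by linarith)
    set c : ℝ := ν ω + δ with hc
    have hc1 : ν ω < c := by simp [hc, hδpos]
    have hc2 : c ≤ T := by
      have : δ ≤ T - ν ω := min_le_right _ _
      simp only [hc]; linarith
    have hRd : ∀ s ∈ Ioc (ν ω) c, |R s ω - Rν| ≤ ε/4 := by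
      intro s hs
      have h1 : s ∈ Ici (ν ω) := le_of_lt hs.1
      have h2 : dist s (ν ω) < δ0 := by
        rw [Real.dist_eq, abs_of_nonneg (by linarith [hs.1.le] : (0:ℝ) ≤ s - ν ω)]
        have : s ≤ ν ω + δ := hs.2
        have : δ ≤ δ0 / 2 := min_le_left _ _
        linarith
      have := hδ0 h1 h2
      rw [Real.dist_eq] at this
      exact this.le
    set δ' : ℝ := Γ c ω - Γ (ν ω) ω with hδ'
    have hδ'pos : 0 < δ' := hrs δ hδpos
    -- decay of the exponential
    set K : ℝ := CP + 3 * CR + 1 with hK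
    have hdecay : Tendsto (fun n : ℕ => K * Real.exp (-((n : ℝ) * δ'))) atTop (nhds 0) := by
      have h1 : Tendsto (fun n : ℕ => (n : ℝ) * δ') atTop atTop :=
        (tendsto_natCast_atTop_atTop (R := ℝ)).atTop_mul_const hδ'pos
      have h2 : Tendsto (fun n : ℕ => -((n : ℝ) * δ')) atTop atBot :=
        tendsto_neg_atTop_atBot.comp h1
      have h3 := Real.tendsto_exp_atBot.comp h2
      simpa using h3.const_mul K
    obtain ⟨N, hN⟩ := (Metric.tendsto_atTop.mp hdecay) (ε/2) (by positivity)
    refine ⟨max N 1, fun n hn => ?_⟩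
    have hnN : N ≤ n := le_of_max_le_left hn
    have hn1 : 1 ≤ n := le_of_max_le_right hn
    set nR : ℝ := (n : ℝ) with hnR
    have hnpos : 0 < nR := by
      rw [hnR]; exact_mod_cast Nat.lt_of_lt_of_le Nat.zero_lt_one hn1
    -- key identity
    have key : ∀ x y : ℝ, x ≤ y →
        nR * ∫ s in Ioc x y, Real.exp (nR * Γ (ν ω) ω - nR * Γ s ω) ∂F.measure =
          Real.exp (nR * Γ (ν ω) ω - nR * Γ x ω) -
            Real.exp (nR * Γ (ν ω) ω - nR * Γ y ω) := by
      intro x y hxy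
      have h0 := stieltjes_exp_integral F hFcont hxy hnpos
      have hFcoe : (⇑F : ℝ → ℝ) = fun s => Γ s ω := rfl
      rw [hFcoe] at h0
      have heq : ∀ s : ℝ, Real.exp (nR * Γ (ν ω) ω - nR * Γ s ω) =
          Real.exp (nR * Γ (ν ω) ω) * Real.exp (-(nR * Γ s ω)) := fun s => by
        rw [← Real.exp_add]; ring_nf
      simp only [heq]
      rw [integral_const_mul]
      rw [show nR * (Real.exp (nR * Γ (ν ω) ω) *
          ∫ s in Ioc x y, Real.exp (-(nR * Γ s ω)) ∂F.measure) =
        Real.exp (nR * Γ (ν ω) ω) *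
          (nR * ∫ s in Ioc x y, Real.exp (-(nR * Γ s ω)) ∂F.measure) by ring, h0,
        mul_sub, ← Real.exp_add, ← Real.exp_add, ← sub_eq_add_neg, ← sub_eq_add_neg]
    -- integrability
    have hconte : Continuous (fun s => Real.exp (nR * Γ (ν ω) ω - nR * Γ s ω)) :=
      Real.continuous_exp.comp (continuous_const.sub (continuous_const.mul (hΓcont ω)))
    have hInte : ∀ x y : ℝ,
        IntegrableOn (fun s => Real.exp (nR * Γ (ν ω) ω - nR * Γ s ω)) (Ioc x y) F.measure :=
      fun x y => hconte.integrableOn_Ioc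
    have hmeasR : Measurable (fun s => R s ω) := measurable_of_rightContinuous (hRrc ω)
    have hFfin : ∀ x y : ℝ, IsFiniteMeasure (F.measure.restrict (Ioc x y)) := by
      intro x y
      constructor
      rw [Measure.restrict_apply_univ, F.measure_Ioc]
      exact ENNReal.ofReal_lt_top
    have hIntRe : ∀ x y : ℝ,
        IntegrableOn (fun s => R s ω * Real.exp (nR * Γ (ν ω) ω - nR * Γ s ω))
          (Ioc x y) F.measure := by
      intro x y
      haveI := hFfin x y
      refine Integrable.mono' (integrable_const (CR * Real.exp (nR * Γ (ν ω) ω + nR * CΓ)))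
        ((hmeasR.mul hconte.measurable).aestronglyMeasurable) ?_
      filter_upwards with s
      rw [norm_mul, Real.norm_eq_abs, Real.norm_eq_abs, Real.abs_exp]
      have h1 : Real.exp (nR * Γ (ν ω) ω - nR * Γ s ω) ≤
          Real.exp (nR * Γ (ν ω) ω + nR * CΓ) := by
        apply Real.exp_le_exp.2
        have := (abs_le.1 (hCΓ s ω)).1
        nlinarith
      exact mul_le_mul (hCR s ω) h1 (Real.exp_pos _).le hCR0
    have hIntRme : ∀ x y : ℝ,
        IntegrableOn (fun s => (R s ω - Rν) * Real.exp (nR * Γ (ν ω) ω - nR * Γ s ω))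
          (Ioc x y) F.measure := by
      intro x y
      simpa only [sub_mul, IntegrableOn] using Integrable.sub' (hIntRe x y) ((hInte x y).const_mul Rν)
    -- decomposition
    set J1 : ℝ := ∫ s in Ioc (ν ω) c,
      (R s ω - Rν) * Real.exp (nR * Γ (ν ω) ω - nR * Γ s ω) ∂F.measure with hJ1def
    clear_value J1
    set J2 : ℝ := ∫ s in Ioc c T,
      (R s ω - Rν) * Real.exp (nR * Γ (ν ω) ω - nR * Γ s ω) ∂F.measure with hJ2def
    clear_value J2
    set E : ℝ := Real.exp (nR * Γ (ν ω) ω - nR * Γ T ω) with hE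
    clear_value E
    set D1 : ℝ := Real.exp (nR * Γ (ν ω) ω - nR * Γ c ω) with hD1
    clear_value D1
    have hI0 : nR * ∫ s in Ioc (ν ω) T,
        Real.exp (nR * Γ (ν ω) ω - nR * Γ s ω) ∂F.measure = 1 - E := by
      rw [key (ν ω) T hνT, sub_self, Real.exp_zero, ← hE]
    have hI1 : nR * ∫ s in Ioc (ν ω) c,
        Real.exp (nR * Γ (ν ω) ω - nR * Γ s ω) ∂F.measure = 1 - D1 := by
      rw [key (ν ω) c hc1.le, sub_self, Real.exp_zero, ← hD1]
    have hI2 : nR * ∫ s in Ioc c T,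
        Real.exp (nR * Γ (ν ω) ω - nR * Γ s ω) ∂F.measure = D1 - E := by
      rw [key c T hc2, ← hD1, ← hE]
    have hGdecomp :
        PT ω * E +
          nR * ∫ s in Ioc (ν ω) T,
            R s ω * Real.exp (nR * Γ (ν ω) ω - nR * Γ s ω) ∂F.measure - Rν =
        (PT ω - Rν) * E + nR * (J1 + J2) := by
      have hsplit : ∫ s in Ioc (ν ω) T,
          (R s ω - Rν) * Real.exp (nR * Γ (ν ω) ω - nR * Γ s ω) ∂F.measure = J1 + J2 := by
        rw [← Ioc_union_Ioc_eq_Ioc hc1.le hc2,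
          setIntegral_union (Set.Ioc_disjoint_Ioc_of_le le_rfl) measurableSet_Ioc
            (hIntRme (ν ω) c) (hIntRme c T), hJ1def, hJ2def]
      have hlin : ∫ s in Ioc (ν ω) T,
          (R s ω - Rν) * Real.exp (nR * Γ (ν ω) ω - nR * Γ s ω) ∂F.measure =
          (∫ s in Ioc (ν ω) T,
            R s ω * Real.exp (nR * Γ (ν ω) ω - nR * Γ s ω) ∂F.measure) -
            Rν * ∫ s in Ioc (ν ω) T,
              Real.exp (nR * Γ (ν ω) ω - nR * Γ s ω) ∂F.measure := by
        simp_rw [sub_mul]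
        rw [integral_sub (hIntRe (ν ω) T) ((hInte (ν ω) T).const_mul Rν), integral_const_mul]
      have h1 : nR * ∫ s in Ioc (ν ω) T,
          R s ω * Real.exp (nR * Γ (ν ω) ω - nR * Γ s ω) ∂F.measure =
          nR * (J1 + J2) + Rν * (1 - E) := by
        rw [← hI0, ← hsplit, hlin]; ring
      rw [h1]; ring
    -- bounds
    have hJ1bd : |J1| ≤ ε/4 * ∫ s in Ioc (ν ω) c,
        Real.exp (nR * Γ (ν ω) ω - nR * Γ s ω) ∂F.measure := by
      rw [hJ1def, ← Real.norm_eq_abs]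
      calc ‖∫ s in Ioc (ν ω) c,
            (R s ω - Rν) * Real.exp (nR * Γ (ν ω) ω - nR * Γ s ω) ∂F.measure‖ ≤
            ∫ s in Ioc (ν ω) c,
              ‖(R s ω - Rν) * Real.exp (nR * Γ (ν ω) ω - nR * Γ s ω)‖ ∂F.measure :=
            norm_integral_le_integral_norm _
        _ ≤ ∫ s in Ioc (ν ω) c,
              ε/4 * Real.exp (nR * Γ (ν ω) ω - nR * Γ s ω) ∂F.measure := by
            refine setIntegral_mono_on (hIntRme (ν ω) c).norm
              ((hInte (ν ω) c).const_mul (ε/4)) measurableSet_Ioc (fun s hs => ?_)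
            rw [norm_mul, Real.norm_eq_abs, Real.norm_eq_abs, Real.abs_exp]
            exact mul_le_mul_of_nonneg_right (hRd s hs) (Real.exp_pos _).le
        _ = ε/4 * ∫ s in Ioc (ν ω) c,
              Real.exp (nR * Γ (ν ω) ω - nR * Γ s ω) ∂F.measure := integral_const_mul _ _
    have hJ2bd : |J2| ≤ 2 * CR * ∫ s in Ioc c T,
        Real.exp (nR * Γ (ν ω) ω - nR * Γ s ω) ∂F.measure := by
      rw [hJ2def, ← Real.norm_eq_abs]
      calc ‖∫ s in Ioc c T,
            (R s ω - Rν) * Real.exp (nR * Γ (ν ω) ω - nR * Γ s ω) ∂F.measure‖ ≤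
            ∫ s in Ioc c T,
              ‖(R s ω - Rν) * Real.exp (nR * Γ (ν ω) ω - nR * Γ s ω)‖ ∂F.measure :=
            norm_integral_le_integral_norm _
        _ ≤ ∫ s in Ioc c T,
              2 * CR * Real.exp (nR * Γ (ν ω) ω - nR * Γ s ω) ∂F.measure := by
            refine setIntegral_mono_on (hIntRme c T).norm
              ((hInte c T).const_mul (2 * CR)) measurableSet_Ioc (fun s hs => ?_)
            rw [norm_mul, Real.norm_eq_abs, Real.norm_eq_abs, Real.abs_exp]
            have hab : |R s ω - Rν| ≤ 2 * CR := by
              rw [sub_eq_add_neg]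
              calc |R s ω + -Rν| ≤ |R s ω| + |(-Rν)| := abs_add_le _ _
                _ ≤ 2 * CR := by
                    rw [abs_neg]
                    have := hCR s ω
                    have := hCR (ν ω) ω
                    simp only [hRν]; linarith
            exact mul_le_mul_of_nonneg_right hab (Real.exp_pos _).le
        _ = 2 * CR * ∫ s in Ioc c T,
              Real.exp (nR * Γ (ν ω) ω - nR * Γ s ω) ∂F.measure := integral_const_mul _ _
    have hJ1' : nR * |J1| ≤ ε/4 * (1 - D1) := by
      rw [← hI1, show ε/4 * (nR * ∫ s in Ioc (ν ω) c,
          Real.exp (nR * Γ (ν ω) ω - nR * Γ s ω) ∂F.measure) =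
        nR * (ε/4 * ∫ s in Ioc (ν ω) c,
          Real.exp (nR * Γ (ν ω) ω - nR * Γ s ω) ∂F.measure) by ring]
      exact mul_le_mul_of_nonneg_left hJ1bd hnpos.le
    have hJ2' : nR * |J2| ≤ 2 * CR * (D1 - E) := by
      rw [← hI2, show 2 * CR * (nR * ∫ s in Ioc c T,
          Real.exp (nR * Γ (ν ω) ω - nR * Γ s ω) ∂F.measure) =
        nR * (2 * CR * ∫ s in Ioc c T,
          Real.exp (nR * Γ (ν ω) ω - nR * Γ s ω) ∂F.measure) by ring]
      exact mul_le_mul_of_nonneg_left hJ2bd hnpos.le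
    have hEpos : 0 < E := by rw [hE]; exact Real.exp_pos _
    have hD1pos : 0 < D1 := by rw [hD1]; exact Real.exp_pos _
    have hED : E ≤ D1 := by
      rw [hE, hD1]
      apply Real.exp_le_exp.2
      have h := hΓmono ω hc2
      have := mul_le_mul_of_nonneg_left h hnpos.le
      linarith
    have hD1le : D1 ≤ 1 := by
      rw [hD1]
      apply Real.exp_le_one_iff.2
      have h := hΓmono ω hc1.le
      have := mul_le_mul_of_nonneg_left h hnpos.le
      linarith
    have hD1eq : D1 = Real.exp (-(nR * δ')) := by
      rw [hD1]; congr 1; rw [hδ']; ring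
    have hKn : K * Real.exp (-(nR * δ')) < ε / 2 := by
      have := hN n hnN
      rw [Real.dist_eq, sub_zero, abs_of_nonneg (by positivity)] at this
      exact this
    -- final estimate
    rw [Real.dist_eq, hGdecomp]
    have habs : |(PT ω - Rν) * E + nR * (J1 + J2)| ≤
        (CP + CR) * E + (nR * |J1| + nR * |J2|) := by
      calc |(PT ω - Rν) * E + nR * (J1 + J2)| ≤
            |(PT ω - Rν) * E| + |nR * (J1 + J2)| := abs_add_le _ _
        _ ≤ (CP + CR) * E + (nR * |J1| + nR * |J2|) := by
            rw [abs_mul, abs_mul, abs_of_pos hEpos, abs_of_pos hnpos]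
            have h1 : |PT ω - Rν| ≤ CP + CR := by
              rw [sub_eq_add_neg]
              calc |PT ω + -Rν| ≤ |PT ω| + |(-Rν)| := abs_add_le _ _
                _ ≤ CP + CR := by rw [abs_neg]; exact add_le_add (hCP ω) (hCR (ν ω) ω)
            have h2 : |J1 + J2| ≤ |J1| + |J2| := abs_add_le _ _
            have h3 := mul_le_mul_of_nonneg_right h1 hEpos.le
            have h4 := mul_le_mul_of_nonneg_left h2 hnpos.le
            rw [mul_add] at h4
            linarith
    calc |(PT ω - Rν) * E + nR * (J1 + J2)| ≤ (CP + CR) * E + (nR * |J1| + nR * |J2|) := habs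
      _ ≤ (CP + CR) * D1 + (ε/4 * (1 - D1) + 2 * CR * (D1 - E)) := by
          have h1 := mul_le_mul_of_nonneg_left hED (by linarith : (0:ℝ) ≤ CP + CR)
          linarith
      _ < ε := by
          have h2 : (CP + 3 * CR) * D1 ≤ K * D1 := by
            apply mul_le_mul_of_nonneg_right _ hD1pos.le
            rw [hK]; linarith
          have hKn' : K * D1 < ε / 2 := by rw [hD1eq]; exact hKn
          have h3 : 0 ≤ ε/4 * D1 := by positivity
          have h3' : ε/4 * (1 - D1) = ε/4 - ε/4 * D1 := by ring
          have h4 : (CP + CR) * D1 + 2 * CR * (D1 - E) =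
              (CP + 3 * CR) * D1 - 2 * (CR * E) := by ring
          have h5 : 0 ≤ CR * E := mul_nonneg hCR0 hEpos.le
          linarith
  · -- ν ω = T
    have hνeq : ν ω = T := le_antisymm hνT (not_lt.1 hlt)
    have hfun : (fun n : ℕ =>
        PT ω * Real.exp ((n : ℝ) * Γ (ν ω) ω - (n : ℝ) * Γ T ω) +
          (n : ℝ) * ∫ s in Ioc (ν ω) T,
            R s ω * Real.exp ((n : ℝ) * Γ (ν ω) ω - (n : ℝ) * Γ s ω) ∂(pathMeasure Γ ω)) =
        fun _ => PT ω := by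
      funext n
      rw [hνeq]
      simp [Ioc_self, sub_self, Real.exp_zero]
    rw [hfun, if_neg (by rw [hνeq]; exact lt_irrefl T)]
    exact tendsto_const_nhds


end
end
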